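/- arXiv:2411.08679 — 4 statements merged into one kernel-verified Lean document; each statement's English description precedes it below -/
import Mathlib

section
/- Let q ≥ 1 and equip ℝ^{2q} with the quadratic form Q_{q,q}. Every totally isotropic linear subspace E ⊆ ℝ^{2q} of dimension q−1 is contained in exactly two totally isotropic subspaces of dimension q; that is, the set {F : F a linear subspace of ℝ^{2q}, dim F = q, Q_{q,q} vanishes on F, E ⊆ F} has exactly two elements. -/
open Matrix

/-- The symmetric matrix of the standard quadratic form of signature `(p,q)` on `ℝ^(p+q)`,
with block form `[[0,0,J],[0,I,0],[J,0,0]]` where `J` is the `q×q` anti-diagonal matrix. -/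
def Mpq (p q : ℕ) : Matrix (Fin (p+q)) (Fin (p+q)) ℝ :=
  Matrix.of fun i j =>
    if ((i:ℕ) + (j:ℕ) + 1 = p + q ∧ ((i:ℕ) < q ∨ (j:ℕ) < q)) then 1
    else if (i = j ∧ q ≤ (i:ℕ) ∧ (i:ℕ) < p) then 1 else 0

/-- The quadratic form `Q_{p,q}`. -/
noncomputable def Qf (p q : ℕ) (v : Fin (p+q) → ℝ) : ℝ := v ⬝ᵥ (Mpq p q).mulVec v

/-- The bilinear form `B_{p,q}`. -/
noncomputable def Bf (p q : ℕ) (v w : Fin (p+q) → ℝ) : ℝ := v ⬝ᵥ (Mpq p q).mulVec w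


lemma Mqq_apply (q : ℕ) (i j : Fin (q+q)) :
    Mpq q q i j = if j = i.rev then 1 else 0 := by
  simp only [Mpq, Matrix.of_apply]
  have hrev : (i.rev : ℕ) = q + q - (i + 1) := Fin.val_rev i
  by_cases h : j = i.rev
  · subst h
    have h1 : (i:ℕ) + (i.rev:ℕ) + 1 = q + q := by omega
    have h2 : (i:ℕ) < q ∨ (i.rev:ℕ) < q := by omega
    rw [if_pos ⟨h1, h2⟩, if_pos rfl]
  · have hj : (j:ℕ) < q + q := j.isLt
    have n1 : ¬((i:ℕ) + (j:ℕ) + 1 = q + q ∧ ((i:ℕ) < q ∨ (j:ℕ) < q)) := by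
      rintro ⟨h1, -⟩; exact h (Fin.ext (by omega))
    have n2 : ¬(i = j ∧ q ≤ (i:ℕ) ∧ (i:ℕ) < q) := by rintro ⟨-, h2, h3⟩; omega
    rw [if_neg n1, if_neg n2, if_neg h]

lemma mulVec_Mqq (q : ℕ) (w : Fin (q+q) → ℝ) :
    (Mpq q q).mulVec w = fun i => w i.rev := by
  funext i
  simp only [Matrix.mulVec, dotProduct, Mqq_apply]
  simp [ite_mul]

lemma Qf_eq (q : ℕ) (v : Fin (q+q) → ℝ) : Qf q q v = ∑ i, v i * v i.rev := by
  simp [Qf, mulVec_Mqq, dotProduct]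

noncomputable def Bb (q : ℕ) : LinearMap.BilinForm ℝ (Fin (q+q) → ℝ) :=
  Matrix.toLinearMap₂' ℝ (Mpq q q)

lemma Bb_apply (q : ℕ) (v w : Fin (q+q) → ℝ) : Bb q v w = ∑ i, v i * w i.rev := by
  rw [Bb, Matrix.toLinearMap₂'_apply', mulVec_Mqq]
  simp [dotProduct]

lemma Qf_eq_Bb (q : ℕ) (v : Fin (q+q) → ℝ) : Qf q q v = Bb q v v := by
  rw [Qf, Bb, Matrix.toLinearMap₂'_apply']

lemma Bb_symm (q : ℕ) (v w : Fin (q+q) → ℝ) : Bb q v w = Bb q w v := by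
  rw [Bb_apply, Bb_apply]
  exact Fintype.sum_equiv Fin.revPerm _ _ (fun i => by
    simp [Fin.rev_rev, mul_comm])

lemma Bb_refl (q : ℕ) : (Bb q).IsRefl := fun v w h => by rw [Bb_symm]; exact h

lemma Bb_nondeg (q : ℕ) : (Bb q).Nondegenerate := by
  refine (LinearMap.IsRefl.nondegenerate_iff_separatingLeft (Bb_refl q)).2 ?_
  intro v hv
  have h := hv (fun i => v i.rev)
  rw [Bb_apply] at h
  simp only [Fin.rev_rev] at h
  funext i
  have : ∀ j ∈ Finset.univ, v j * v j = 0 :=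
    (Finset.sum_eq_zero_iff_of_nonneg (fun j _ => mul_self_nonneg (v j))).1 h
  exact mul_self_eq_zero.1 (this i (Finset.mem_univ i))

lemma polar (q : ℕ) (v w : Fin (q+q) → ℝ) :
    Qf q q (v + w) = Qf q q v + Qf q q w + 2 * Bb q v w := by
  simp only [Qf_eq_Bb, map_add, LinearMap.add_apply]
  rw [Bb_symm q w v]; ring

lemma iso_flat {q : ℕ} {S : Submodule ℝ (Fin (q+q) → ℝ)}
    (hS : ∀ v ∈ S, Qf q q v = 0) {v w : Fin (q+q) → ℝ}
    (hv : v ∈ S) (hw : w ∈ S) : Bb q v w = 0 := by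
  have h := polar q v w
  rw [hS _ (S.add_mem hv hw), hS _ hv, hS _ hw] at h
  linarith

/-- The linear map `v ↦ (v i + ε * v (rev i))_{i < q}`. -/
noncomputable def Sm (q : ℕ) (ε : ℝ) : (Fin (q+q) → ℝ) →ₗ[ℝ] (Fin q → ℝ) where
  toFun v := fun i => v (Fin.castAdd q i) + ε * v (Fin.castAdd q i).rev
  map_add' v w := by funext i; simp only [Pi.add_apply]; ring
  map_smul' c v := by
    funext i; simp only [Pi.smul_apply, smul_eq_mul, RingHom.id_apply]; ring

lemma Sm_surj (q : ℕ) (ε : ℝ) : Function.Surjective (Sm q ε) := by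
  intro t
  refine ⟨fun j => if h : (j:ℕ) < q then t ⟨j, h⟩ else 0, ?_⟩
  funext i
  have h1 : ((Fin.castAdd q i : Fin (q+q)) : ℕ) = (i : ℕ) := rfl
  have h2 : (((Fin.castAdd q i : Fin (q+q)).rev : Fin (q+q)) : ℕ) = q + q - ((i:ℕ) + 1) := by
    rw [Fin.val_rev, h1]
  have hi := i.isLt
  simp only [Sm, LinearMap.coe_mk, AddHom.coe_mk]
  rw [dif_pos (show ((Fin.castAdd q i : Fin (q+q)) : ℕ) < q by omega),
      dif_neg (show ¬(((Fin.castAdd q i : Fin (q+q)).rev : Fin (q+q)) : ℕ) < q by omega)]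
  simp only [mul_zero, add_zero]
  congr 1

lemma finrank_ker_Sm (q : ℕ) (ε : ℝ) :
    Module.finrank ℝ (LinearMap.ker (Sm q ε)) = q := by
  have h := LinearMap.finrank_range_add_finrank_ker (Sm q ε)
  rw [LinearMap.range_eq_top.2 (Sm_surj q ε)] at h
  have h1 : Module.finrank ℝ (Fin (q+q) → ℝ) = q + q := by simp
  have h2 : Module.finrank ℝ (⊤ : Submodule ℝ (Fin q → ℝ)) = q := by simp
  omega

lemma mem_ker_Sm {q : ℕ} {ε : ℝ} (hε : ε * ε = 1) {v : Fin (q+q) → ℝ}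
    (hv : v ∈ LinearMap.ker (Sm q ε)) (j : Fin (q+q)) : v j.rev = -(ε * v j) := by
  have key : ∀ i : Fin q, v (Fin.castAdd q i) + ε * v (Fin.castAdd q i).rev = 0 := by
    intro i
    have := LinearMap.mem_ker.1 hv
    exact congrFun this i
  have hj := j.isLt
  by_cases h : (j:ℕ) < q
  · have e : Fin.castAdd q (⟨(j:ℕ), h⟩ : Fin q) = j := Fin.ext rfl
    have := key ⟨(j:ℕ), h⟩
    rw [e] at this
    -- v j + ε * v j.rev = 0
    have h2 : ε * (v j) + (ε * ε) * v j.rev = 0 := by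
      have := congrArg (fun x => ε * x) this
      simpa [mul_add, mul_assoc] using this
    rw [hε] at h2; linarith
  · have hrev : ((j.rev : Fin (q+q)) : ℕ) = q + q - ((j:ℕ)+1) := Fin.val_rev j
    have h' : ((j.rev : Fin (q+q)) : ℕ) < q := by omega
    have e : Fin.castAdd q (⟨((j.rev : Fin (q+q)) : ℕ), h'⟩ : Fin q) = j.rev := Fin.ext rfl
    have := key ⟨((j.rev : Fin (q+q)) : ℕ), h'⟩
    rw [e, Fin.rev_rev] at this
    linarith

lemma Qf_neg_on_ker {q : ℕ} {ε : ℝ} (hε : ε * ε = 1) {v : Fin (q+q) → ℝ}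
    (hv : v ∈ LinearMap.ker (Sm q ε)) (hv0 : v ≠ 0) :
    Qf q q v = -ε * ∑ i, v i * v i ∧ (0:ℝ) < ∑ i, v i * v i := by
  constructor
  · rw [Qf_eq]
    rw [Finset.mul_sum]
    refine Finset.sum_congr rfl fun i _ => ?_
    rw [mem_ker_Sm hε hv i]; ring
  · have h1 : ∀ i ∈ Finset.univ, (0:ℝ) ≤ v i * v i := fun i _ => mul_self_nonneg _
    rcases Function.ne_iff.1 hv0 with ⟨i, hi⟩
    refine Finset.sum_pos' h1 ⟨i, Finset.mem_univ i, ?_⟩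
    simp only [Pi.zero_apply] at hi
    exact mul_self_pos.2 hi


lemma finrank_sup_span {V : Type*} [AddCommGroup V] [Module ℝ V] [FiniteDimensional ℝ V]
    (E : Submodule ℝ V) (u : V) (hu : u ∉ E) :
    Module.finrank ℝ ↥(E ⊔ ℝ ∙ u) = Module.finrank ℝ E + 1 := by
  have h0 : u ≠ 0 := fun h => hu (h ▸ E.zero_mem)
  have hinf : E ⊓ (ℝ ∙ u) = ⊥ := by
    rw [eq_bot_iff]
    rintro x ⟨hxE, hxS⟩
    rcases Submodule.mem_span_singleton.1 hxS with ⟨c, rfl⟩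
    rcases eq_or_ne c 0 with rfl | hc
    · simp
    · exfalso
      apply hu
      have := E.smul_mem c⁻¹ hxE
      rwa [smul_smul, inv_mul_cancel₀ hc, one_smul] at this
  have := Submodule.finrank_sup_add_finrank_inf_eq E (ℝ ∙ u)
  rw [hinf, finrank_bot, add_zero, finrank_span_singleton h0] at this
  exact this

lemma quad_roots (α β γ : ℝ) (h : α*γ < β*β) :
    ∃ a₁ b₁ a₂ b₂ : ℝ,
      ¬(a₁ = 0 ∧ b₁ = 0) ∧ ¬(a₂ = 0 ∧ b₂ = 0) ∧
      (a₁*a₁*α + 2*(a₁*b₁)*β + b₁*b₁*γ = 0) ∧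
      (a₂*a₂*α + 2*(a₂*b₂)*β + b₂*b₂*γ = 0) ∧
      (∀ t : ℝ, ¬(a₂ = t*a₁ ∧ b₂ = t*b₁)) ∧
      (∀ a b : ℝ, ¬(a = 0 ∧ b = 0) → a*a*α + 2*(a*b)*β + b*b*γ = 0 →
        (∃ t, t ≠ 0 ∧ a = t*a₁ ∧ b = t*b₁) ∨ (∃ t, t ≠ 0 ∧ a = t*a₂ ∧ b = t*b₂)) := by
  set s : ℝ := Real.sqrt (β*β - α*γ) with hsdef
  have hs : s*s = β*β - α*γ := Real.mul_self_sqrt (by linarith)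
  have hs0 : 0 < s := Real.sqrt_pos.2 (by linarith)
  rcases eq_or_ne α 0 with hα | hα
  · subst hα
    have hβ : β ≠ 0 := by intro hβ; rw [hβ] at h; nlinarith
    rcases eq_or_ne γ 0 with hγ | hγ
    · subst hγ
      refine ⟨1, 0, 0, 1, fun h' => one_ne_zero h'.1, fun h' => one_ne_zero h'.2,
        by ring, by ring, ?_, ?_⟩
      · rintro t ⟨h1, h2⟩
        rw [mul_zero] at h2
        exact one_ne_zero h2
      · rintro a b hab hq
        have hfac : (a*b) * β = 0 := by linarith
        rcases mul_eq_zero.1 hfac with h' | h'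
        · rcases mul_eq_zero.1 h' with ha | hb
          · right; exact ⟨b, fun hb => hab ⟨ha, hb⟩, by rw [ha]; ring, by ring⟩
          · left; exact ⟨a, fun ha => hab ⟨ha, hb⟩, by ring, by rw [hb]; ring⟩
        · exact absurd h' hβ
    · -- α = 0, γ ≠ 0 : roots (1,0) and (γ, -2β)
      refine ⟨1, 0, γ, -2*β, fun h' => one_ne_zero h'.1, fun h' => hγ h'.1,
        by ring, by ring, ?_, ?_⟩
      · rintro t ⟨h1, h2⟩
        rw [mul_zero] at h2
        exact hβ (by linarith)
      · rintro a b hab hq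
        have hfac : b * (2*a*β + b*γ) = 0 := by linarith
        rcases mul_eq_zero.1 hfac with hb | hfac2
        · left; exact ⟨a, fun ha => hab ⟨ha, hb⟩, by ring, by rw [hb]; ring⟩
        · right
          have hb : b ≠ 0 := by
            intro hb
            rw [hb] at hfac2
            have ha : a = 0 := by
              have : 2*a*β = 0 := by linarith
              rcases mul_eq_zero.1 this with h'|h'
              · rcases mul_eq_zero.1 h' with h''|h''
                · norm_num at h''
                · exact h''
              · exact absurd h' hβ
            exact hab ⟨ha, hb⟩
          refine ⟨b / (-2*β), div_ne_zero hb (by intro h'; exact hβ (by linarith)), ?_, ?_⟩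
          · field_simp
            linarith
          · field_simp
  · -- α ≠ 0 : roots (s-β, α), (-s-β, α)
    refine ⟨s-β, α, -s-β, α, fun h' => hα h'.2, fun h' => hα h'.2,
      by linear_combination α * hs, by linear_combination α * hs, ?_, ?_⟩
    · rintro t ⟨h1, h2⟩
      have ht : t = 1 := by
        have h3 : t * α = 1 * α := by rw [one_mul]; linarith
        exact mul_right_cancel₀ hα h3
      rw [ht, one_mul] at h1
      linarith
    · rintro a b hab hq
      have hfac : (α*a + (β-s)*b) * (α*a + (β+s)*b) = 0 := by
        linear_combination α * hq - b*b * hs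
      have hb : b ≠ 0 := by
        intro hb
        rw [hb] at hq
        have : a*a*α = 0 := by linarith
        rcases mul_eq_zero.1 this with h'|h'
        · exact hab ⟨mul_self_eq_zero.1 h', hb⟩
        · exact hα h'
      rcases mul_eq_zero.1 hfac with hf | hf
      · left
        refine ⟨b / α, div_ne_zero hb hα, ?_, by field_simp⟩
        field_simp
        linarith
      · right
        refine ⟨b / α, div_ne_zero hb hα, ?_, by field_simp⟩
        field_simp
        linarith

/-- Every totally isotropic subspace of `ℝ^{q,q}` of dimension `q-1` is contained in
exactly two totally isotropic subspaces of dimension `q`. -/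
theorem stmt0 (q : ℕ) (hq : 1 ≤ q)
    (E : Submodule ℝ (Fin (q+q) → ℝ))
    (hdim : Module.finrank ℝ ↥E = q - 1)
    (hiso : ∀ v ∈ E, Qf q q v = 0) :
    {F : Submodule ℝ (Fin (q+q) → ℝ) |
      Module.finrank ℝ ↥F = q ∧ (∀ v ∈ F, Qf q q v = 0) ∧ E ≤ F}.ncard = 2 := by
  classical
  have hfinV : Module.finrank ℝ (Fin (q+q) → ℝ) = q + q := by simp
  set W : Submodule ℝ (Fin (q+q) → ℝ) := (Bb q).orthogonal E with hWdef
  have hEW : E ≤ W := fun e he =>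
    (LinearMap.BilinForm.mem_orthogonal_iff (B := Bb q)).2 (fun n hn => iso_flat hiso hn he)
  have hfinW : Module.finrank ℝ ↥W = q + 1 := by
    rw [hWdef, LinearMap.BilinForm.finrank_orthogonal (Bb_nondeg q), hfinV, hdim]
    omega
  have horth : ∀ e ∈ E, ∀ w ∈ W, Bb q e w = 0 := fun e he w hw =>
    ((LinearMap.BilinForm.mem_orthogonal_iff (B := Bb q)).1 hw) e he
  have hne1 : E ≠ W := fun h => by rw [h, hfinW] at hdim; omega
  obtain ⟨u₁, hu₁W, hu₁E⟩ := SetLike.exists_of_lt (hEW.lt_of_ne hne1)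
  have hfinE₁ : Module.finrank ℝ ↥(E ⊔ (ℝ ∙ u₁)) = q := by
    rw [finrank_sup_span E u₁ hu₁E, hdim]; omega
  have hE₁W : E ⊔ (ℝ ∙ u₁) ≤ W :=
    sup_le hEW ((Submodule.span_singleton_le_iff_mem _ _).2 hu₁W)
  have hne2 : E ⊔ (ℝ ∙ u₁) ≠ W := fun h => by rw [h, hfinW] at hfinE₁; omega
  obtain ⟨u₂, hu₂W, hu₂E₁⟩ := SetLike.exists_of_lt (hE₁W.lt_of_ne hne2)
  have hWeq : (E ⊔ (ℝ ∙ u₁)) ⊔ (ℝ ∙ u₂) = W := by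
    apply Submodule.eq_of_le_of_finrank_eq
    · exact sup_le hE₁W ((Submodule.span_singleton_le_iff_mem _ _).2 hu₂W)
    · rw [finrank_sup_span _ u₂ hu₂E₁, hfinE₁, hfinW]
  have hcd : ∀ c d : ℝ, c • u₁ + d • u₂ ∈ E → c = 0 ∧ d = 0 := by
    intro c d hmem
    have hd : d = 0 := by
      by_contra hd
      apply hu₂E₁
      have h1 : d • u₂ ∈ E ⊔ (ℝ ∙ u₁) := by
        have h2 : d • u₂ = (c • u₁ + d • u₂) - c • u₁ := by abel
        rw [h2]
        exact Submodule.sub_mem _ (Submodule.mem_sup_left hmem)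
          (Submodule.mem_sup_right (Submodule.mem_span_singleton.2 ⟨c, rfl⟩))
      have h3 := Submodule.smul_mem _ d⁻¹ h1
      rwa [smul_smul, inv_mul_cancel₀ hd, one_smul] at h3
    refine ⟨?_, hd⟩
    rw [hd, zero_smul, add_zero] at hmem
    by_contra hc
    apply hu₁E
    have h3 := E.smul_mem c⁻¹ hmem
    rwa [smul_smul, inv_mul_cancel₀ hc, one_smul] at h3
  set α := Bb q u₁ u₁ with hαdef
  set β := Bb q u₁ u₂ with hβdef
  set γ := Bb q u₂ u₂ with hγdef
  have Qcomp : ∀ e ∈ E, ∀ a b : ℝ,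
      Qf q q (e + (a • u₁ + b • u₂)) = a*a*α + 2*(a*b)*β + b*b*γ := by
    intro e he a b
    have hy : a • u₁ + b • u₂ ∈ W := W.add_mem (W.smul_mem _ hu₁W) (W.smul_mem _ hu₂W)
    have h1 : Bb q e (a • u₁ + b • u₂) = 0 := horth e he _ hy
    have h2 : Bb q (a • u₁ + b • u₂) e = 0 := by rw [Bb_symm]; exact h1
    have h3 : Bb q e e = 0 := by rw [← Qf_eq_Bb]; exact hiso e he
    have h4 : Bb q u₂ u₁ = β := by rw [hβdef, Bb_symm]
    have expand : Bb q (e + (a • u₁ + b • u₂)) (e + (a • u₁ + b • u₂))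
        = Bb q e e + Bb q e (a • u₁ + b • u₂) + Bb q (a • u₁ + b • u₂) e
          + Bb q (a • u₁ + b • u₂) (a • u₁ + b • u₂) := by
      simp only [map_add, LinearMap.add_apply]; ring
    have expand2 : Bb q (a • u₁ + b • u₂) (a • u₁ + b • u₂)
        = a*a*(Bb q u₁ u₁) + (a*b)*(Bb q u₁ u₂) + (a*b)*(Bb q u₂ u₁)
          + b*b*(Bb q u₂ u₂) := by
      simp only [map_add, LinearMap.add_apply, _root_.map_smul, LinearMap.smul_apply,
        smul_eq_mul]
      ring
    rw [Qf_eq_Bb, expand, h1, h2, h3, expand2, h4, ← hαdef, ← hβdef, ← hγdef]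
    ring
  have hdecomp : ∀ x ∈ W, ∃ e ∈ E, ∃ a b : ℝ, x = e + (a • u₁ + b • u₂) := by
    intro x hx
    rw [← hWeq] at hx
    rcases Submodule.mem_sup.1 hx with ⟨y, hy, z, hz, rfl⟩
    rcases Submodule.mem_sup.1 hy with ⟨e, he, w, hw, rfl⟩
    rcases Submodule.mem_span_singleton.1 hw with ⟨a, rfl⟩
    rcases Submodule.mem_span_singleton.1 hz with ⟨b, rfl⟩
    exact ⟨e, he, a, b, by abel⟩
  -- discriminant is positive
  have hΔ : α*γ < β*β := by
    by_contra hle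
    push_neg at hle
    have hsemi : (∀ a b : ℝ, 0 ≤ a*a*α + 2*(a*b)*β + b*b*γ) ∨
                 (∀ a b : ℝ, a*a*α + 2*(a*b)*β + b*b*γ ≤ 0) := by
      rcases lt_trichotomy α 0 with h0 | h0 | h0
      · right; intro a b
        nlinarith [sq_nonneg (α*a + β*b), mul_nonneg (sub_nonneg.2 hle) (sq_nonneg b)]
      · have hβ0 : β = 0 := by
          have h1 : β*β ≤ 0 := by rw [h0] at hle; linarith [hle]
          exact mul_self_eq_zero.1 (le_antisymm h1 (mul_self_nonneg β))
        rcases le_or_gt 0 γ with h1 | h1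
        · left; intro a b
          rw [h0, hβ0]
          simpa using mul_nonneg (mul_self_nonneg b) h1
        · right; intro a b
          rw [h0, hβ0]
          simpa using mul_nonpos_of_nonneg_of_nonpos (mul_self_nonneg b) h1.le
      · left; intro a b
        nlinarith [sq_nonneg (α*a + β*b), mul_nonneg (sub_nonneg.2 hle) (sq_nonneg b)]
    have key : ∀ ε : ℝ, ε * ε = 1 →
        ∃ a b : ℝ, ∃ z : Fin (q+q) → ℝ, z ≠ 0 ∧ z ∈ LinearMap.ker (Sm q ε) ∧
          Qf q q z = a*a*α + 2*(a*b)*β + b*b*γ := by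
      intro ε hε
      have h1 := Submodule.finrank_sup_add_finrank_inf_eq W (LinearMap.ker (Sm q ε))
      have h2 : Module.finrank ℝ ↥(W ⊔ LinearMap.ker (Sm q ε)) ≤ q + q := by
        have h3 := Submodule.finrank_le (W ⊔ LinearMap.ker (Sm q ε))
        rwa [hfinV] at h3
      rw [hfinW, finrank_ker_Sm q ε] at h1
      have hbot : W ⊓ LinearMap.ker (Sm q ε) ≠ ⊥ := by
        intro h
        rw [h, finrank_bot] at h1
        omega
      obtain ⟨z, hz, hz0⟩ := Submodule.exists_mem_ne_zero_of_ne_bot hbot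
      obtain ⟨hzW, hzN⟩ := hz
      obtain ⟨e, he, a, b, hzdec⟩ := hdecomp z hzW
      have hQz := Qcomp e he a b
      rw [← hzdec] at hQz
      exact ⟨a, b, z, hz0, hzN, hQz⟩
    rcases hsemi with hpos | hneg
    · obtain ⟨a, b, z, hz0, hzN, hQz⟩ := key 1 (by norm_num)
      obtain ⟨hq1, hq2⟩ := Qf_neg_on_ker (by norm_num : (1:ℝ)*1 = 1) hzN hz0
      rw [hQz] at hq1
      have := hpos a b
      nlinarith [hq2]
    · obtain ⟨a, b, z, hz0, hzN, hQz⟩ := key (-1) (by norm_num)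
      obtain ⟨hq1, hq2⟩ := Qf_neg_on_ker (by norm_num : (-1:ℝ)*(-1) = 1) hzN hz0
      rw [hQz] at hq1
      have := hneg a b
      nlinarith [hq2]
  obtain ⟨a₁, b₁, a₂, b₂, hp₁, hp₂, hr₁, hr₂, hprop, hcompl⟩ := quad_roots α β γ hΔ
  set Fd : ℝ → ℝ → Submodule ℝ (Fin (q+q) → ℝ) :=
    fun a b => E ⊔ (ℝ ∙ (a • u₁ + b • u₂)) with hFd
  have hnotmem : ∀ a b : ℝ, ¬(a = 0 ∧ b = 0) → a • u₁ + b • u₂ ∉ E :=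
    fun a b hab h => hab (hcd a b h)
  have hrank : ∀ a b : ℝ, ¬(a = 0 ∧ b = 0) → Module.finrank ℝ ↥(Fd a b) = q := by
    intro a b hab
    rw [hFd]
    simp only
    rw [finrank_sup_span E _ (hnotmem a b hab), hdim]
    omega
  have hisoF : ∀ a b : ℝ, (a*a*α + 2*(a*b)*β + b*b*γ = 0) → ∀ v ∈ Fd a b, Qf q q v = 0 := by
    intro a b hquad v hv
    rcases Submodule.mem_sup.1 hv with ⟨e, he, y, hy, rfl⟩
    rcases Submodule.mem_span_singleton.1 hy with ⟨t, rfl⟩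
    have h1 : t • (a • u₁ + b • u₂) = (t*a) • u₁ + (t*b) • u₂ := by
      rw [smul_add, smul_smul, smul_smul]
    rw [h1, Qcomp e he (t*a) (t*b)]
    linear_combination (t*t) * hquad
  have hchar : ∀ F : Submodule ℝ (Fin (q+q) → ℝ),
      Module.finrank ℝ ↥F = q → (∀ v ∈ F, Qf q q v = 0) → E ≤ F →
      ∃ a b : ℝ, ¬(a = 0 ∧ b = 0) ∧ (a*a*α + 2*(a*b)*β + b*b*γ = 0) ∧ F = Fd a b := by
    intro F hF hFiso hEF
    have hFW : F ≤ W := fun f hf =>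
      (LinearMap.BilinForm.mem_orthogonal_iff (B := Bb q)).2 (fun n hn => iso_flat hFiso (hEF hn) hf)
    have hneEF : E ≠ F := fun h => by rw [h, hF] at hdim; omega
    obtain ⟨x, hxF, hxE⟩ := SetLike.exists_of_lt (hEF.lt_of_ne hneEF)
    obtain ⟨e, he, a, b, hxdec⟩ := hdecomp x (hFW hxF)
    have hab : ¬(a = 0 ∧ b = 0) := by
      rintro ⟨rfl, rfl⟩
      apply hxE
      have : x = e := by rw [hxdec]; simp
      rw [this]; exact he
    have hyF : a • u₁ + b • u₂ ∈ F := by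
      have h1 : a • u₁ + b • u₂ = x - e := by rw [hxdec]; abel
      rw [h1]; exact F.sub_mem hxF (hEF he)
    have hFdF : Fd a b ≤ F :=
      sup_le hEF ((Submodule.span_singleton_le_iff_mem _ _).2 hyF)
    have hFeq : Fd a b = F :=
      Submodule.eq_of_le_of_finrank_eq hFdF (by rw [hrank a b hab, hF])
    refine ⟨a, b, hab, ?_, hFeq.symm⟩
    have h0 := Qcomp 0 E.zero_mem a b
    rw [zero_add] at h0
    rw [← h0]
    exact hFiso _ hyF
  have hinj : ∀ a b a' b' : ℝ, ¬(a = 0 ∧ b = 0) → ¬(a' = 0 ∧ b' = 0) → Fd a b = Fd a' b' →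
      ∃ t : ℝ, t ≠ 0 ∧ a' = t*a ∧ b' = t*b := by
    intro a b a' b' hab hab' heq
    have hmem : a' • u₁ + b' • u₂ ∈ Fd a b := by
      rw [heq]; exact Submodule.mem_sup_right (Submodule.mem_span_singleton_self _)
    rcases Submodule.mem_sup.1 hmem with ⟨e, he, y, hy, hsum⟩
    rcases Submodule.mem_span_singleton.1 hy with ⟨t, rfl⟩
    have hE : (a' - t*a) • u₁ + (b' - t*b) • u₂ ∈ E := by
      have h1 : (a' - t*a) • u₁ + (b' - t*b) • u₂
          = (a' • u₁ + b' • u₂) - t • (a • u₁ + b • u₂) := by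
        rw [smul_add, smul_smul, smul_smul, sub_smul, sub_smul]; abel
      rw [h1, ← hsum]
      have h2 : e + t • (a • u₁ + b • u₂) - t • (a • u₁ + b • u₂) = e := by abel
      rw [h2]; exact he
    obtain ⟨h1, h2⟩ := hcd _ _ hE
    have ha' : a' = t*a := by linarith
    have hb' : b' = t*b := by linarith
    refine ⟨t, ?_, ha', hb'⟩
    rintro rfl
    exact hab' ⟨by rw [ha']; ring, by rw [hb']; ring⟩
  have hscale : ∀ a b t : ℝ, t ≠ 0 → Fd (t*a) (t*b) = Fd a b := by
    intro a b t ht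
    rw [hFd]
    simp only
    have h1 : (t*a) • u₁ + (t*b) • u₂ = t • (a • u₁ + b • u₂) := by
      rw [smul_add, smul_smul, smul_smul]
    rw [h1, Submodule.span_singleton_smul_eq (IsUnit.mk0 t ht)]
  have hSeq : {F : Submodule ℝ (Fin (q+q) → ℝ) |
      Module.finrank ℝ ↥F = q ∧ (∀ v ∈ F, Qf q q v = 0) ∧ E ≤ F}
      = {Fd a₁ b₁, Fd a₂ b₂} := by
    ext F
    simp only [Set.mem_setOf_eq, Set.mem_insert_iff, Set.mem_singleton_iff]
    constructor
    · rintro ⟨h1, h2, h3⟩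
      obtain ⟨a, b, hab, hquad, rfl⟩ := hchar F h1 h2 h3
      rcases hcompl a b hab hquad with ⟨t, ht, rfl, rfl⟩ | ⟨t, ht, rfl, rfl⟩
      · left; exact hscale a₁ b₁ t ht
      · right; exact hscale a₂ b₂ t ht
    · rintro (rfl | rfl)
      · exact ⟨hrank _ _ hp₁, hisoF _ _ hr₁, le_sup_left⟩
      · exact ⟨hrank _ _ hp₂, hisoF _ _ hr₂, le_sup_left⟩
  rw [hSeq]
  have hne : Fd a₁ b₁ ≠ Fd a₂ b₂ := by
    intro h
    obtain ⟨t, ht, h1, h2⟩ := hinj a₁ b₁ a₂ b₂ hp₁ hp₂ h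
    exact hprop t ⟨h1, h2⟩
  exact Set.ncard_pair hne
end

section
/- Let n ≥ 1, let 1 ≤ i ≤ n, and let g be an invertible n×n real matrix. Let E = span(e_{n−i+1},…,e_n) and H = span(e_{i+1},…,e_n), where (e_1,…,e_n) is the standard basis of ℝⁿ. Then the subspaces g·E (the image of E under g) and H are complementary, i.e. g·E ⊕ H = ℝⁿ, if and only if det_i(g) ≠ 0, where det_i(g) is the determinant of the submatrix of g with rows 1,…,i and columns n−i+1,…,n. -/
open Matrix

/-- The top-right `i×i` minor of an `n×n` matrix: the determinant of the submatrix with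
rows `1,…,i` and columns `n-i+1,…,n` (in 1-indexed terms). -/
noncomputable def detTR {n : ℕ} (U : Matrix (Fin n) (Fin n) ℝ) (i : ℕ) : ℝ :=
  Matrix.det (Matrix.of fun a b : Fin i =>
    if h : (a : ℕ) < n ∧ n - i + (b : ℕ) < n then U ⟨a, h.1⟩ ⟨n - i + b, h.2⟩ else 0)

/-- The coordinate subspace of `ℝⁿ` spanned by the standard basis vectors `e_a`, `a ∈ S`. -/
def coordSub (n : ℕ) (S : Set (Fin n)) : Submodule ℝ (Fin n → ℝ) where
  carrier := {v | ∀ a, a ∉ S → v a = 0}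
  add_mem' := by
    intro u v hu hv a ha
    simp [hu a ha, hv a ha]
  zero_mem' := by
    intro a _
    rfl
  smul_mem' := by
    intro c v hv a ha
    simp [hv a ha]

lemma mem_coordSub {n : ℕ} {S : Set (Fin n)} {v : Fin n → ℝ} :
    v ∈ coordSub n S ↔ ∀ a, a ∉ S → v a = 0 := Iff.rfl

/-- For an invertible matrix `g`, with `E = span(e_{n-i+1},…,e_n)` and
`H = span(e_{i+1},…,e_n)`, the subspaces `g·E` and `H` are complementary iff the top-right
`i×i` minor of `g` is nonzero. -/
theorem stmt3 (n i : ℕ) (hn : 1 ≤ n) (hi1 : 1 ≤ i) (hi2 : i ≤ n)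
    (g : Matrix (Fin n) (Fin n) ℝ) (hg : IsUnit g) :
    IsCompl (Submodule.map g.mulVecLin (coordSub n {a | n - i ≤ (a:ℕ)}))
        (coordSub n {a | i ≤ (a:ℕ)}) ↔ detTR g i ≠ 0 := by
  have hb : ∀ b : Fin i, n - i + (b : ℕ) < n := fun b => by omega
  have ha : ∀ a : Fin i, (a : ℕ) < n := fun a => lt_of_lt_of_le a.2 hi2
  set A : Matrix (Fin i) (Fin i) ℝ :=
    Matrix.of (fun a b => g ⟨a, ha a⟩ ⟨n - i + b, hb b⟩) with hA
  have hdet : detTR g i = A.det := by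
    unfold detTR
    congr 1
    ext a b
    rw [Matrix.of_apply, dif_pos ⟨ha a, hb b⟩]
    rfl
  have hni : n - i + i = n := Nat.sub_add_cancel hi2
  have key : ∀ (v : Fin n → ℝ), (∀ j : Fin n, (j : ℕ) < n - i → v j = 0) →
      ∀ a : Fin n, g.mulVec v a
        = ∑ b : Fin i, g a ⟨n - i + b, hb b⟩ * v ⟨n - i + b, hb b⟩ := by
    intro v hv a
    rw [Matrix.mulVec, dotProduct,
      ← (finSumFinEquiv.trans (finCongr hni)).sum_comp (fun j => g a j * v j),
      Fintype.sum_sum_type]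
    have hl : ∀ c : Fin (n - i),
        g a ((finSumFinEquiv.trans (finCongr hni)) (Sum.inl c))
          * v ((finSumFinEquiv.trans (finCongr hni)) (Sum.inl c)) = 0 := by
      intro c
      have hcv : (((finSumFinEquiv.trans (finCongr hni)) (Sum.inl c) : Fin n) : ℕ)
          = (c : ℕ) := by
        simp
      have : v ((finSumFinEquiv.trans (finCongr hni)) (Sum.inl c)) = 0 :=
        hv _ (by rw [hcv]; exact c.2)
      rw [this, mul_zero]
    have hr : ∀ b : Fin i,
        ((finSumFinEquiv.trans (finCongr hni)) (Sum.inr b)) = (⟨n - i + b, hb b⟩ : Fin n) := by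
      intro b
      apply Fin.ext
      simp
    rw [Finset.sum_congr rfl (fun c _ => hl c), Finset.sum_const_zero, zero_add]
    exact Finset.sum_congr rfl (fun b _ => by rw [hr b])
  -- extension of x : Fin i → ℝ to an element of E
  have hextE : ∀ x : Fin i → ℝ,
      (fun j : Fin n => if h : n - i ≤ (j : ℕ) then x ⟨(j : ℕ) - (n - i), by omega⟩ else 0)
        ∈ coordSub n {a : Fin n | n - i ≤ (a:ℕ)} := by
    intro x a haa
    simp only [Set.mem_setOf_eq] at haa
    exact dif_neg haa
  have hextval : ∀ (x : Fin i → ℝ) (b : Fin i),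
      (fun j : Fin n => if h : n - i ≤ (j : ℕ) then x ⟨(j : ℕ) - (n - i), by omega⟩ else 0)
        ⟨n - i + b, hb b⟩ = x b := by
    intro x b
    have h1 : n - i ≤ n - i + (b : ℕ) := Nat.le_add_right _ _
    simp only [dif_pos h1]
    congr 1
    apply Fin.ext
    simp
  have hextzero : ∀ (x : Fin i → ℝ) (j : Fin n), (j : ℕ) < n - i →
      (fun j : Fin n => if h : n - i ≤ (j : ℕ) then x ⟨(j : ℕ) - (n - i), by omega⟩ else 0)
        j = 0 := by
    intro x j hj
    exact dif_neg (Nat.not_le_of_lt hj)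
  have hmv : ∀ (x : Fin i → ℝ) (a : Fin i),
      g.mulVec (fun j : Fin n =>
          if h : n - i ≤ (j : ℕ) then x ⟨(j : ℕ) - (n - i), by omega⟩ else 0) ⟨a, ha a⟩
        = A.mulVec x a := by
    intro x a
    rw [key _ (hextzero x)]
    simp only [Matrix.mulVec, dotProduct, hA, Matrix.of_apply]
    refine Finset.sum_congr rfl fun b _ => ?_
    rw [dif_pos (Nat.le_add_right (n - i) (b : ℕ))]
    have hbb : (⟨n - i + (b : ℕ) - (n - i), by omega⟩ : Fin i) = b := by
      apply Fin.ext
      simp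
    rw [hbb]
  rw [hdet]
  constructor
  · -- IsCompl → det ≠ 0
    intro hc hAdet
    obtain ⟨x, hx0, hxA⟩ := (Matrix.exists_mulVec_eq_zero_iff).2 hAdet
    have hwE : g.mulVec (fun j : Fin n =>
          if h : n - i ≤ (j : ℕ) then x ⟨(j : ℕ) - (n - i), by omega⟩ else 0)
        ∈ Submodule.map g.mulVecLin (coordSub n {a : Fin n | n - i ≤ (a:ℕ)}) :=
      ⟨_, hextE x, rfl⟩
    have hwH : g.mulVec (fun j : Fin n =>
          if h : n - i ≤ (j : ℕ) then x ⟨(j : ℕ) - (n - i), by omega⟩ else 0)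
        ∈ coordSub n {a : Fin n | i ≤ (a:ℕ)} := by
      intro a haa
      simp only [Set.mem_setOf_eq, not_le] at haa
      have h2 := hmv x ⟨(a : ℕ), haa⟩
      rw [hxA] at h2
      exact h2
    have hw0 : g.mulVec (fun j : Fin n =>
          if h : n - i ≤ (j : ℕ) then x ⟨(j : ℕ) - (n - i), by omega⟩ else 0) = 0 :=
      (Submodule.disjoint_def.mp hc.disjoint) _ hwE hwH
    have hginj : Function.Injective g.mulVec := Matrix.mulVec_injective_iff_isUnit.mpr hg
    have hv0 : (fun j : Fin n =>
          if h : n - i ≤ (j : ℕ) then x ⟨(j : ℕ) - (n - i), by omega⟩ else 0)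
        = (0 : Fin n → ℝ) := by
      apply hginj
      rw [hw0, Matrix.mulVec_zero]
    apply hx0
    funext b
    rw [← hextval x b, hv0]
    simp
  · -- det ≠ 0 → IsCompl
    intro hAdet
    have hAu : IsUnit A.det := isUnit_iff_ne_zero.mpr hAdet
    have hAinv : ∀ c : Fin i → ℝ, A.mulVec (A⁻¹.mulVec c) = c := by
      intro c
      rw [Matrix.mulVec_mulVec, Matrix.mul_nonsing_inv A hAu, Matrix.one_mulVec]
    have hAinj : Function.Injective A.mulVec :=
      Matrix.mulVec_injective_iff_isUnit.mpr ((Matrix.isUnit_iff_isUnit_det A).mpr hAu)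
    constructor
    · -- disjoint
      rw [Submodule.disjoint_def]
      rintro w ⟨v, hvE, rfl⟩ hwH
      have hvz : ∀ j : Fin n, (j : ℕ) < n - i → v j = 0 := by
        intro j hj
        exact hvE j (by intro hmem; simp only [Set.mem_setOf_eq] at hmem; omega)
      have hAx : A.mulVec (fun b => v ⟨n - i + b, hb b⟩) = 0 := by
        funext a
        have h1 := key v hvz ⟨a, ha a⟩
        have h2 : g.mulVecLin v ⟨(a:ℕ), ha a⟩ = 0 := by
          apply hwH
          intro hmem
          simp only [Set.mem_setOf_eq] at hmem
          exact absurd hmem (by omega)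
        simp only [Matrix.mulVecLin_apply] at h2
        rw [h1] at h2
        simpa [Matrix.mulVec, dotProduct, hA] using h2
      have hx0 : (fun b : Fin i => v ⟨n - i + (b : ℕ), hb b⟩) = (0 : Fin i → ℝ) :=
        hAinj (by rw [hAx]; simp)
      have hv0 : v = 0 := by
        funext j
        by_cases hj : (j : ℕ) < n - i
        · exact hvz j hj
        · push_neg at hj
          have hb' : (j : ℕ) - (n - i) < i := by omega
          have hj2 : j = ⟨n - i + ((j:ℕ) - (n - i)), hb (⟨(j : ℕ) - (n - i), hb'⟩ : Fin i)⟩ := by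
            apply Fin.ext
            simp
            omega
          rw [hj2]
          have := congrFun hx0 ⟨(j:ℕ) - (n - i), hb'⟩
          simpa using this
      rw [hv0]
      simp
    · -- codisjoint
      rw [codisjoint_iff, eq_top_iff]
      intro w _
      set c : Fin i → ℝ := fun a => w ⟨a, ha a⟩ with hc
      set x : Fin i → ℝ := A⁻¹.mulVec c with hxdef
      have huE : g.mulVec (fun j : Fin n =>
            if h : n - i ≤ (j : ℕ) then x ⟨(j : ℕ) - (n - i), by omega⟩ else 0)
          ∈ Submodule.map g.mulVecLin (coordSub n {a : Fin n | n - i ≤ (a:ℕ)}) :=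
        ⟨_, hextE x, rfl⟩
      have hwuH : w - g.mulVec (fun j : Fin n =>
            if h : n - i ≤ (j : ℕ) then x ⟨(j : ℕ) - (n - i), by omega⟩ else 0)
          ∈ coordSub n {a : Fin n | i ≤ (a:ℕ)} := by
        intro a haa
        simp only [Set.mem_setOf_eq, not_le] at haa
        have h2 := hmv x ⟨(a : ℕ), haa⟩
        have h3 : A.mulVec x = c := hAinv c
        rw [h3] at h2
        have h4 : g.mulVec (fun j : Fin n =>
            if h : n - i ≤ (j : ℕ) then x ⟨(j : ℕ) - (n - i), by omega⟩ else 0) a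
            = w a := h2
        rw [Pi.sub_apply, h4, sub_self]
      have hsplit : w = g.mulVec (fun j : Fin n =>
            if h : n - i ≤ (j : ℕ) then x ⟨(j : ℕ) - (n - i), by omega⟩ else 0)
          + (w - g.mulVec (fun j : Fin n =>
            if h : n - i ≤ (j : ℕ) then x ⟨(j : ℕ) - (n - i), by omega⟩ else 0)) := by
        ring
      rw [hsplit]
      exact Submodule.add_mem_sup huE hwuH
end

section
/- Let p ≥ q ≥ 1, n = p+q, and let U be an n×n real matrix with Uᵀ M_{p,q} U = M_{p,q} (so U is invertible). Then for all 1 ≤ a, b ≤ q one has (U⁻¹)_{a, n+1−b} = U_{b, n+1−a}; consequently, for every 1 ≤ i ≤ q the top-right i×i submatrix of U⁻¹ is the anti-transpose (reflection across the anti-diagonal) of the top-right i×i submatrix of U, and in particular det_i(U⁻¹) = det_i(U). -/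
open Matrix

/-- The involution of `Fin (p+q)` whose permutation matrix is `Mpq p q`. -/
def sig (p q : ℕ) (i : Fin (p+q)) : Fin (p+q) :=
  if (i:ℕ) < q ∨ p ≤ (i:ℕ) then ⟨p + q - 1 - (i:ℕ), by have := i.isLt; omega⟩ else i

lemma sig_val (p q : ℕ) (i : Fin (p+q)) :
    (sig p q i : ℕ) = if (i:ℕ) < q ∨ p ≤ (i:ℕ) then p + q - 1 - (i:ℕ) else i := by
  unfold sig; split_ifs <;> rfl

lemma sig_sig (p q : ℕ) (i : Fin (p+q)) : sig p q (sig p q i) = i := by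
  have hi := i.isLt
  have h1 := sig_val p q i
  have h2 := sig_val p q (sig p q i)
  apply Fin.ext
  split_ifs at h1 h2 <;> omega

lemma Mpq_apply (p q : ℕ) (i j : Fin (p+q)) :
    Mpq p q i j = if j = sig p q i then 1 else 0 := by
  have hi := i.isLt; have hj := j.isLt
  have h1 := sig_val p q i
  simp only [Mpq, of_apply, Fin.ext_iff]
  split_ifs at h1 ⊢ <;> first | rfl | (exfalso; omega)

lemma Mpq_mul_apply (p q : ℕ) (A : Matrix (Fin (p+q)) (Fin (p+q)) ℝ) (i j : Fin (p+q)) :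
    (Mpq p q * A) i j = A (sig p q i) j := by
  rw [mul_apply]
  simp [Mpq_apply, ite_mul]

lemma mul_Mpq_apply (p q : ℕ) (A : Matrix (Fin (p+q)) (Fin (p+q)) ℝ) (i j : Fin (p+q)) :
    (A * Mpq p q) i j = A i (sig p q j) := by
  rw [mul_apply]
  have : ∀ k : Fin (p+q), (j = sig p q k) = (k = sig p q j) := by
    intro k
    apply propext; constructor <;> intro h <;> subst h <;> rw [sig_sig]
  simp [Mpq_apply, this, mul_ite]

lemma Mpq_mul_Mpq (p q : ℕ) : Mpq p q * Mpq p q = 1 := by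
  ext i j
  rw [Mpq_mul_apply, Mpq_apply, sig_sig, one_apply]
  by_cases h : i = j <;> simp [h, eq_comm]

lemma inv_eq (p q : ℕ) (U : Matrix (Fin (p+q)) (Fin (p+q)) ℝ)
    (hU : Uᵀ * Mpq p q * U = Mpq p q) :
    U⁻¹ = Mpq p q * Uᵀ * Mpq p q := by
  apply Matrix.inv_eq_left_inv
  calc Mpq p q * Uᵀ * Mpq p q * U = Mpq p q * (Uᵀ * Mpq p q * U) := by
        simp only [Matrix.mul_assoc]
    _ = 1 := by rw [hU, Mpq_mul_Mpq]

lemma Mpq_inv_apply (p q : ℕ) (U : Matrix (Fin (p+q)) (Fin (p+q)) ℝ)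
    (hU : Uᵀ * Mpq p q * U = Mpq p q) (a c : Fin (p+q)) :
    U⁻¹ a c = U (sig p q c) (sig p q a) := by
  rw [inv_eq p q U hU, mul_Mpq_apply, Mpq_mul_apply, transpose_apply]

/-- If `Uᵀ M_{p,q} U = M_{p,q}` then `U` is invertible, the top-right `q×q` corner of `U⁻¹`
is the anti-transpose of that of `U` (entrywise: `(U⁻¹)_{a,n+1-b} = U_{b,n+1-a}` for
`1 ≤ a,b ≤ q`), and `det_i(U⁻¹) = det_i(U)` for all `1 ≤ i ≤ q`. -/
theorem stmt4 (p q : ℕ) (hq : 1 ≤ q) (hpq : q ≤ p)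
    (U : Matrix (Fin (p+q)) (Fin (p+q)) ℝ)
    (hU : Uᵀ * Mpq p q * U = Mpq p q) :
    IsUnit U ∧
    (∀ a b : Fin (p+q), (a:ℕ) < q → (b:ℕ) < q →
      U⁻¹ a ⟨p + q - 1 - (b:ℕ), by omega⟩ = U b ⟨p + q - 1 - (a:ℕ), by omega⟩) ∧
    (∀ i : ℕ, 1 ≤ i → i ≤ q → detTR U⁻¹ i = detTR U i) := by
  refine ⟨?_, ?_, ?_⟩
  · have h1 : (Mpq p q * Uᵀ * Mpq p q) * U = 1 := by
      calc Mpq p q * Uᵀ * Mpq p q * U = Mpq p q * (Uᵀ * Mpq p q * U) := by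
            simp only [Matrix.mul_assoc]
        _ = 1 := by rw [hU, Mpq_mul_Mpq]
    have := invertibleOfLeftInverse _ _ h1
    exact isUnit_of_invertible U
  · intro a b ha hb
    rw [Mpq_inv_apply p q U hU]
    have haa := a.isLt
    congr 1 <;> apply Fin.ext <;> rw [sig_val] <;> split_ifs <;> simp at * <;> omega
  · intro i hi1 hi2
    unfold detTR
    have key : (Matrix.of fun a b : Fin i =>
        if h : (a : ℕ) < p+q ∧ p+q - i + (b : ℕ) < p+q then U⁻¹ ⟨a, h.1⟩ ⟨p+q - i + b, h.2⟩ else 0)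
      = ((Matrix.of fun a b : Fin i =>
        if h : (a : ℕ) < p+q ∧ p+q - i + (b : ℕ) < p+q then U ⟨a, h.1⟩ ⟨p+q - i + b, h.2⟩ else 0)ᵀ).submatrix
          (Fin.revPerm : Equiv.Perm (Fin i)) (Fin.revPerm : Equiv.Perm (Fin i)) := by
      ext a b
      have ha := a.isLt; have hb := b.isLt
      simp only [Matrix.of_apply, Matrix.submatrix_apply, Matrix.transpose_apply,
        Fin.revPerm_apply, Fin.val_rev]
      rw [dif_pos (by omega), dif_pos (by omega)]
      rw [Mpq_inv_apply p q U hU]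
      congr 1 <;> apply Fin.ext <;> rw [sig_val] <;> split_ifs <;> simp at * <;> omega
    rw [key, Matrix.det_submatrix_equiv_self, Matrix.det_transpose]
end

section
/- Let V be a real vector space, B : V × V → ℝ a symmetric bilinear form, and write Q(v) = B(v,v). Let v₁, v₂ ∈ V and a, b ∈ ℝ, and assume Q(v₁) ≠ 0. Then the determinant of the 2×2 real matrix [[−b + (a/2)·Q(v₂) − B(v₁,v₂), −(Q(v₁) + 2ab)/2],[−Q(v₂)/2, b]] equals −(1/4)·Q(v₁)·Q(v₂ + (2b/Q(v₁))·v₁). (This is the transversality equation for (1,2)-flags: the top-right 2×2 minor of the unipotent matrix parametrizing a pointed photon factors as a product of values of the quadratic form.) -/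
open Matrix

/-- The transversality equation for (1,2)-flags: assuming `Q(v₁) ≠ 0`, the top-right `2×2`
minor of the unipotent matrix parametrizing a pointed photon factors as
`-(1/4)·Q(v₁)·Q(v₂ + (2b/Q(v₁))·v₁)`.  Here `B` is a symmetric bilinear form and
`Q(v) = B(v,v)`. -/
theorem stmt5 (V : Type*) [AddCommGroup V] [Module ℝ V]
    (B : LinearMap.BilinForm ℝ V) (hsymm : ∀ x y : V, B x y = B y x)
    (v₁ v₂ : V) (a b : ℝ) (h : B v₁ v₁ ≠ 0) :
    Matrix.det !![-b + (a/2) * (B v₂ v₂) - B v₁ v₂, -((B v₁ v₁) + 2*a*b)/2;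
                  -(B v₂ v₂)/2, b]
      = -(1/4) * (B v₁ v₁) *
          (B (v₂ + (2*b/(B v₁ v₁)) • v₁) (v₂ + (2*b/(B v₁ v₁)) • v₁)) := by
  have h21 := hsymm v₂ v₁
  simp only [Matrix.det_fin_two_of, map_add, _root_.map_smul, LinearMap.map_smul, LinearMap.add_apply,
    LinearMap.smul_apply, smul_eq_mul]
  rw [hsymm v₂ v₁]
  field_simp
  ring
end
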